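/- arXiv:1607.06484 — 6 statements merged into one kernel-verified Lean document; each statement's English description precedes it below -/
import Mathlib

section
/- Existence part of the key property of s-holomorphic functions (Proposition 3.3, existence): Fix δ > 0, integers m < n and reals c < d, and let Ω^• , Ω^∘ be the black and white points of the discrete rectangular domain Ω_δ. Let F : ℂ → ℂ be such that its restriction to each vertical segment of Ω^• ∪ Ω^∘ is continuous, and F is s-holomorphic at every interior white point and at every interior black point of Ω_δ. Then there exists a function H : Ω^• ∪ Ω^∘ → ℝ, whose restriction to each vertical segment is continuous, such that: (a) for every white point z ∈ Ω^∘ with z + δ/2 ∈ Ω^•, H(z + δ/2) − H(z) = |F^↓(z)|², and for every black point z ∈ Ω^• with z + δ/2 ∈ Ω^∘, H(z + δ/2) − H(z) = −|F^↑(z)|²; and (b) at every point z ∈ Ω^• ∪ Ω^∘ with c < Im z < d, the vertical derivative Ḣ(z) exists and equals (2/δ)·F^↑(z)·F^↓(z) (which is a real number). -/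
noncomputable section

/-- Projection of `a` onto the line `e^{-iπ/4}·ℝ`. -/
def projUp (a : ℂ) : ℂ := (a - Complex.I * (starRingEnd ℂ) a) / 2

/-- Projection of `a` onto the line `e^{iπ/4}·ℝ`. -/
def projDn (a : ℂ) : ℂ := (a + Complex.I * (starRingEnd ℂ) a) / 2

/-- `F^↑(z)`, the projection of `F z` onto `e^{-iπ/4}·ℝ`. -/
def Fup (F : ℂ → ℂ) (z : ℂ) : ℂ := projUp (F z)

/-- `F^↓(z)`, the projection of `F z` onto `e^{iπ/4}·ℝ`. -/
def Fdn (F : ℂ → ℂ) (z : ℂ) : ℂ := projDn (F z)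

/-- Vertical derivative: `G` has derivative `d` at `z` in the vertical direction,
i.e. the map `t ↦ G (z + i t)` (for real `t`) has derivative `d` at `t = 0`. -/
def HasVDerivAt {E : Type*} [NormedAddCommGroup E] [NormedSpace ℝ E]
    (G : ℂ → E) (d : E) (z : ℂ) : Prop :=
  HasDerivAt (fun t : ℝ => G (z + (t : ℂ) * Complex.I)) d 0

/-- Second vertical derivative: there is a function `G'` which is a vertical derivative of `G`
at all points `z + i t` for `t` near `0`, and `G'` has vertical derivative `d` at `z`. -/
def HasVDeriv2At {E : Type*} [NormedAddCommGroup E] [NormedSpace ℝ E]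
    (G : ℂ → E) (d : E) (z : ℂ) : Prop :=
  ∃ G' : ℂ → E,
    (∀ᶠ t in nhds (0 : ℝ), HasVDerivAt G (G' (z + (t : ℂ) * Complex.I)) (z + (t : ℂ) * Complex.I))
    ∧ HasVDerivAt G' d z

/-- `F` is s-holomorphic at a white point `w`. -/
def SHolWhite (δ : ℝ) (F : ℂ → ℂ) (w : ℂ) : Prop :=
  Fup F w = Fup F (w - (δ / 2 : ℝ)) ∧ Fdn F w = Fdn F (w + (δ / 2 : ℝ)) ∧
  HasVDerivAt (Fup F) (Complex.I / δ * (Fdn F (w + (δ / 2 : ℝ)) - Fdn F (w - (δ / 2 : ℝ)))) w ∧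
  HasVDerivAt (Fdn F) (Complex.I / δ * (Fup F (w + (δ / 2 : ℝ)) - Fup F (w - (δ / 2 : ℝ)))) w

/-- `F` is s-holomorphic at a black point `u`. -/
def SHolBlack (δ : ℝ) (F : ℂ → ℂ) (u : ℂ) : Prop :=
  Fup F u = Fup F (u + (δ / 2 : ℝ)) ∧ Fdn F u = Fdn F (u - (δ / 2 : ℝ)) ∧
  HasVDerivAt (Fup F) (Complex.I / δ * (Fdn F (u + (δ / 2 : ℝ)) - Fdn F (u - (δ / 2 : ℝ)))) u ∧
  HasVDerivAt (Fdn F) (Complex.I / δ * (Fup F (u + (δ / 2 : ℝ)) - Fup F (u - (δ / 2 : ℝ)))) u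

/-- Black points `Ω^•` of the rectangular discrete domain `Ω_δ`:
points `δ k + i t` with `m ≤ k ≤ n` and `t ∈ [c, d]`. -/
def BlackPts (δ : ℝ) (m n : ℤ) (c d : ℝ) : Set ℂ :=
  {z | (∃ k : ℤ, m ≤ k ∧ k ≤ n ∧ z.re = δ * k) ∧ c ≤ z.im ∧ z.im ≤ d}

/-- White points `Ω^∘` of the rectangular discrete domain `Ω_δ`:
points `δ (k + 1/2) + i t` with `m ≤ k ≤ n - 1` and `t ∈ [c, d]`. -/
def WhitePts (δ : ℝ) (m n : ℤ) (c d : ℝ) : Set ℂ :=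
  {z | (∃ k : ℤ, m ≤ k ∧ k ≤ n - 1 ∧ z.re = δ * (k + 1 / 2)) ∧ c ≤ z.im ∧ z.im ≤ d}

/-- Interior black points: `m < k < n` and `c < t < d`. -/
def IntBlackPts (δ : ℝ) (m n : ℤ) (c d : ℝ) : Set ℂ :=
  {z | (∃ k : ℤ, m < k ∧ k < n ∧ z.re = δ * k) ∧ c < z.im ∧ z.im < d}

/-- Interior white points: `m ≤ k ≤ n - 1` and `c < t < d`. -/
def IntWhitePts (δ : ℝ) (m n : ℤ) (c d : ℝ) : Set ℂ :=
  {z | (∃ k : ℤ, m ≤ k ∧ k ≤ n - 1 ∧ z.re = δ * (k + 1 / 2)) ∧ c < z.im ∧ z.im < d}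


/-! ### Auxiliary lemmas -/

lemma conj_projUp (a : ℂ) : (starRingEnd ℂ) (projUp a) = Complex.I * projUp a := by
  simp only [projUp, map_div₀, map_sub, map_mul, Complex.conj_conj, Complex.conj_I, map_ofNat]
  linear_combination ((starRingEnd ℂ) a / 2) * Complex.I_mul_I

lemma conj_projDn (a : ℂ) : (starRingEnd ℂ) (projDn a) = -Complex.I * projDn a := by
  simp only [projDn, map_div₀, map_add, map_mul, Complex.conj_conj, Complex.conj_I, map_ofNat]
  linear_combination ((starRingEnd ℂ) a / 2) * Complex.I_mul_I

lemma continuous_projUp : Continuous projUp := by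
  unfold projUp
  exact (continuous_id.sub (continuous_const.mul Complex.continuous_conj)).div_const 2

lemma continuous_projDn : Continuous projDn := by
  unfold projDn
  exact (continuous_id.add (continuous_const.mul Complex.continuous_conj)).div_const 2

lemma norm_sq_eq' (z : ℂ) : ‖z‖^2 = z.re^2 + z.im^2 := by
  rw [Complex.sq_norm, Complex.normSq_apply]; ring

lemma hasDerivAt_norm_sq {f : ℝ → ℂ} {D : ℂ} {s : ℝ} (hf : HasDerivAt f D s) :
    HasDerivAt (fun t => ‖f t‖^2) (2 * ((starRingEnd ℂ) (f s) * D).re) s := by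
  have hre : HasDerivAt (fun t => (f t).re) D.re s :=
    Complex.reCLM.hasFDerivAt.comp_hasDerivAt s hf
  have him : HasDerivAt (fun t => (f t).im) D.im s :=
    Complex.imCLM.hasFDerivAt.comp_hasDerivAt s hf
  have key : (fun t => ‖f t‖^2) = fun t => (f t).re^2 + (f t).im^2 :=
    funext fun t => norm_sq_eq' _
  rw [key]
  refine ((hre.pow 2).add (him.pow 2)).congr_deriv ?_
  simp [Complex.mul_re, Complex.conj_re, Complex.conj_im]
  ring

lemma ftc_Icc {c d : ℝ} {h N : ℝ → ℝ} (hh : Continuous h)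
    (hN : ContinuousOn N (Set.Icc c d))
    (hder : ∀ s ∈ Set.Ioo c d, HasDerivAt N (h s) s)
    {a b : ℝ} (ha : a ∈ Set.Icc c d) (hb : b ∈ Set.Icc c d) :
    ∫ s in a..b, h s = N b - N a := by
  have main : ∀ a b : ℝ, a ∈ Set.Icc c d → b ∈ Set.Icc c d → a ≤ b →
      ∫ s in a..b, h s = N b - N a := by
    intro a b ha hb hab
    refine intervalIntegral.integral_eq_sub_of_hasDeriv_right_of_le hab
      (hN.mono (Set.Icc_subset_Icc ha.1 hb.2)) (fun x hx => ?_)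
      (hh.intervalIntegrable a b)
    exact (hder x ⟨lt_of_le_of_lt ha.1 hx.1, lt_of_lt_of_le hx.2 hb.2⟩).hasDerivWithinAt
  rcases le_total a b with hab | hab
  · exact main a b ha hb hab
  · rw [intervalIntegral.integral_symm, main b a hb ha hab]; ring

lemma vderiv_shift {G : ℂ → ℂ} {D : ℂ} {x s : ℝ}
    (h : HasDerivAt (fun t : ℝ => G ((x:ℂ) + (s:ℂ)*Complex.I + (t:ℂ) * Complex.I)) D 0) :
    HasDerivAt (fun t : ℝ => G ((x:ℂ) + (t:ℂ)*Complex.I)) D s := by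
  have h' : HasDerivAt (fun t : ℝ => G ((x:ℂ) + (s:ℂ)*Complex.I + (t:ℂ) * Complex.I)) D
      (s + -s) := by simpa using h
  have hcomp := h'.comp_add_const s (-s)
  have heq : (fun t : ℝ => G ((x:ℂ) + (t:ℂ)*Complex.I))
      = (fun t : ℝ => G ((x:ℂ) + (s:ℂ)*Complex.I + ((t + -s : ℝ):ℂ) * Complex.I)) := by
    funext t
    congr 1
    push_cast
    ring
  rw [heq]
  exact hcomp

/-- Proposition 3.3 (existence part): for `F` s-holomorphic in the rectangular discrete
domain `Ω_δ`, there exists `H : Ω^• ∪ Ω^∘ → ℝ`, continuous on vertical segments, satisfying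
the increment relations (a) and the vertical-derivative relation (b)
`Ḣ(z) = (2/δ)·F^↑(z)·F^↓(z)` (a real number). -/
theorem sholomorphic_exists_H
    (δ : ℝ) (hδ : 0 < δ) (m n : ℤ) (hmn : m < n) (c d : ℝ) (hcd : c < d)
    (F : ℂ → ℂ)
    (hFcont : ∀ z ∈ BlackPts δ m n c d ∪ WhitePts δ m n c d,
      ContinuousOn (fun t : ℝ => F ((z.re : ℂ) + (t : ℂ) * Complex.I)) (Set.Icc c d))
    (hshW : ∀ w ∈ IntWhitePts δ m n c d, SHolWhite δ F w)
    (hshB : ∀ u ∈ IntBlackPts δ m n c d, SHolBlack δ F u) :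
    ∃ H : ℂ → ℝ,
      (∀ z ∈ BlackPts δ m n c d ∪ WhitePts δ m n c d,
        ContinuousOn (fun t : ℝ => H ((z.re : ℂ) + (t : ℂ) * Complex.I)) (Set.Icc c d)) ∧
      (∀ z ∈ WhitePts δ m n c d, z + (δ / 2 : ℝ) ∈ BlackPts δ m n c d →
        H (z + (δ / 2 : ℝ)) - H z = ‖Fdn F z‖ ^ 2) ∧
      (∀ z ∈ BlackPts δ m n c d, z + (δ / 2 : ℝ) ∈ WhitePts δ m n c d →
        H (z + (δ / 2 : ℝ)) - H z = -‖Fup F z‖ ^ 2) ∧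
      (∀ z ∈ BlackPts δ m n c d ∪ WhitePts δ m n c d, c < z.im → z.im < d →
        ∃ r : ℝ, HasVDerivAt H r z ∧ (r : ℂ) = 2 / δ * Fup F z * Fdn F z) := by
  have hδ' : δ ≠ 0 := ne_of_gt hδ
  set t0 : ℝ := (c+d)/2 with ht0def
  have ht0 : t0 ∈ Set.Icc c d := by
    constructor <;> (rw [ht0def]; linarith)
  set clamp : ℝ → ℝ := fun s => max c (min d s) with hclampdef
  have hclamp_mem : ∀ s, clamp s ∈ Set.Icc c d := by
    intro s
    exact ⟨le_max_left _ _, max_le (le_of_lt hcd) (min_le_left d s)⟩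
  have hclamp_id : ∀ s ∈ Set.Icc c d, clamp s = s := by
    intro s hs
    simp only [hclampdef]
    rw [min_eq_right hs.2, max_eq_right hs.1]
  have hclamp_cont : Continuous clamp :=
    continuous_const.max (continuous_const.min continuous_id)
  set g : ℝ → ℝ → ℝ := fun x s =>
    (2/δ) * (Fup F ((x:ℂ) + (s:ℂ)*Complex.I) * Fdn F ((x:ℂ) + (s:ℂ)*Complex.I)).re with hgdef
  have hFc : ∀ z ∈ BlackPts δ m n c d ∪ WhitePts δ m n c d,
      Continuous (fun s : ℝ => F ((z.re:ℂ) + ((clamp s : ℝ):ℂ)*Complex.I)) := by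
    intro z hz
    exact (hFcont z hz).comp_continuous hclamp_cont hclamp_mem
  have hgcc : ∀ z ∈ BlackPts δ m n c d ∪ WhitePts δ m n c d,
      Continuous (fun s => g z.re (clamp s)) := by
    intro z hz
    have h1 := hFc z hz
    have h2 : Continuous (fun s : ℝ =>
        (Fup F ((z.re:ℂ) + ((clamp s : ℝ):ℂ)*Complex.I)
          * Fdn F ((z.re:ℂ) + ((clamp s : ℝ):ℂ)*Complex.I)).re) :=
      Complex.continuous_re.comp ((continuous_projUp.comp h1).mul (continuous_projDn.comp h1))
    have h3 : Continuous (fun s : ℝ => 2/δ * (Fup F ((z.re:ℂ) + ((clamp s : ℝ):ℂ)*Complex.I)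
          * Fdn F ((z.re:ℂ) + ((clamp s : ℝ):ℂ)*Complex.I)).re) := continuous_const.mul h2
    simpa [hgdef] using h3
  have hprim : ∀ z ∈ BlackPts δ m n c d ∪ WhitePts δ m n c d, ∀ t : ℝ,
      HasDerivAt (fun u => ∫ s in t0..u, g z.re (clamp s)) (g z.re (clamp t)) t := by
    intro z hz t
    have hc := hgcc z hz
    exact intervalIntegral.integral_hasDerivAt_right (hc.intervalIntegrable _ _)
      (hc.stronglyMeasurableAtFilter _ _) hc.continuousAt
  set step : ℤ → ℝ := fun j => if Even j
    then -‖Fup F (((δ*(j:ℝ)/2 : ℝ):ℂ) + (t0:ℂ)*Complex.I)‖^2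
    else ‖Fdn F (((δ*(j:ℝ)/2 : ℝ):ℂ) + (t0:ℂ)*Complex.I)‖^2 with hstepdef
  set C : ℤ → ℝ := fun j => ∑ i ∈ Finset.range (j - 2*m).toNat, step (2*m + (i:ℤ)) with hCdef
  have hCstep : ∀ j : ℤ, 2*m ≤ j → C (j+1) = C j + step j := by
    intro j hj
    have h1 : (j + 1 - 2*m).toNat = (j - 2*m).toNat + 1 := by omega
    simp only [hCdef, h1, Finset.sum_range_succ]
    congr 2
    omega
  set H : ℂ → ℝ := fun z => C (round (2*z.re/δ)) + ∫ s in t0..z.im, g z.re (clamp s) with hHdef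
  have hHval : ∀ x t : ℝ, H ((x:ℂ) + (t:ℂ)*Complex.I)
      = C (round (2*x/δ)) + ∫ s in t0..t, g x (clamp s) := by
    intro x t
    simp [hHdef]
  refine ⟨H, ?_, ?_, ?_, ?_⟩
  · -- continuity on vertical segments
    intro z hz
    have hPcont : Continuous (fun u : ℝ => ∫ s in t0..u, g z.re (clamp s)) := by
      have hdiff : Differentiable ℝ (fun u : ℝ => ∫ s in t0..u, g z.re (clamp s)) :=
        fun u => (hprim z hz u).differentiableAt
      exact hdiff.continuous
    have hcont : Continuous fun t : ℝ => H ((z.re:ℂ) + (t:ℂ)*Complex.I) := by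
      have heq : (fun t : ℝ => H ((z.re:ℂ) + (t:ℂ)*Complex.I))
          = fun t : ℝ => C (round (2*z.re/δ)) + ∫ s in t0..t, g z.re (clamp s) :=
        funext fun t => hHval z.re t
      rw [heq]
      exact continuous_const.add hPcont
    exact hcont.continuousOn
  · -- white increment
    rintro z ⟨⟨k, hmk, hkn, hre⟩, him1, him2⟩ hu
    have hzw : z ∈ WhitePts δ m n c d := ⟨⟨k, hmk, hkn, hre⟩, him1, him2⟩
    have hzU : z ∈ BlackPts δ m n c d ∪ WhitePts δ m n c d := Or.inr hzw
    have huU : z + ((δ/2 : ℝ):ℂ) ∈ BlackPts δ m n c d ∪ WhitePts δ m n c d := Or.inl hu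
    have hure : (z + ((δ/2:ℝ):ℂ)).re = z.re + δ/2 := by simp
    have hz_eq : z = (z.re:ℂ) + (z.im:ℂ)*Complex.I := (Complex.re_add_im z).symm
    have hu_eq : z + ((δ/2:ℝ):ℂ) = ((z.re + δ/2 : ℝ):ℂ) + ((z.im:ℝ):ℂ)*Complex.I := by
      push_cast
      linear_combination (Complex.re_add_im z).symm
    have hq1 : 2*z.re/δ = ((2*k+1 : ℤ) : ℝ) := by
      rw [hre]; push_cast; field_simp
    have hq2 : 2*(z.re + δ/2)/δ = ((2*k+2 : ℤ) : ℝ) := by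
      rw [hre]; push_cast; field_simp; ring
    have hv1 : H z = C (2*k+1) + ∫ s in t0..z.im, g z.re (clamp s) := by
      nth_rewrite 1 [hz_eq]
      rw [hHval, hq1, round_intCast]
    have hv2 : H (z + ((δ/2:ℝ):ℂ))
        = C (2*k+2) + ∫ s in t0..z.im, g (z.re + δ/2) (clamp s) := by
      rw [hu_eq, hHval, hq2, round_intCast]
    set N : ℝ → ℝ := fun t => ‖Fdn F ((z.re:ℂ) + (t:ℂ)*Complex.I)‖^2 with hNdef
    have hNcont : ContinuousOn N (Set.Icc c d) := by
      have houter : Continuous (fun w : ℂ => ‖projDn w‖^2) := (continuous_projDn.norm).pow 2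
      exact houter.comp_continuousOn (hFcont z hzU)
    have hc2 : Continuous (fun s => g (z.re + δ/2) (clamp s)) := by
      have := hgcc _ huU
      rwa [hure] at this
    have hderd : ∀ s ∈ Set.Ioo c d,
        HasDerivAt N (g (z.re + δ/2) (clamp s) - g z.re (clamp s)) s := by
      intro s hs
      have hwmem : (z.re:ℂ) + (s:ℂ)*Complex.I ∈ IntWhitePts δ m n c d := by
        refine ⟨⟨k, hmk, hkn, ?_⟩, by simpa using hs.1, by simpa using hs.2⟩
        simpa using hre
      obtain ⟨h1, h2, h3, h4⟩ := hshW _ hwmem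
      have hD := vderiv_shift h4
      have hN' : HasDerivAt N (2 * ((starRingEnd ℂ)
          (Fdn F ((z.re:ℂ) + (s:ℂ)*Complex.I))
          * (Complex.I / δ * (Fup F ((z.re:ℂ) + (s:ℂ)*Complex.I + ((δ/2 : ℝ):ℂ))
              - Fup F ((z.re:ℂ) + (s:ℂ)*Complex.I - ((δ/2 : ℝ):ℂ))))).re) s := by
        simp only [hNdef]
        exact hasDerivAt_norm_sq hD
      have hpt1 : (z.re:ℂ) + (s:ℂ)*Complex.I + ((δ/2:ℝ):ℂ)
          = ((z.re + δ/2 : ℝ):ℂ) + (s:ℂ)*Complex.I := by push_cast; ring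
      have hpt2 : (z.re:ℂ) + (s:ℂ)*Complex.I - ((δ/2:ℝ):ℂ)
          = ((z.re - δ/2 : ℝ):ℂ) + (s:ℂ)*Complex.I := by push_cast; ring
      have hval : g (z.re + δ/2) (clamp s) - g z.re (clamp s)
          = 2 * ((starRingEnd ℂ) (Fdn F ((z.re:ℂ) + (s:ℂ)*Complex.I))
          * (Complex.I / δ * (Fup F ((z.re:ℂ) + (s:ℂ)*Complex.I + ((δ/2 : ℝ):ℂ))
              - Fup F ((z.re:ℂ) + (s:ℂ)*Complex.I - ((δ/2 : ℝ):ℂ))))).re := by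
        rw [hclamp_id s ⟨le_of_lt hs.1, le_of_lt hs.2⟩]
        simp only [hgdef]
        rw [hpt1] at h2 ⊢
        rw [← h2, ← h1]
        set a := Fdn F ((z.re:ℂ) + (s:ℂ)*Complex.I) with hadef
        set A := Fup F (((z.re + δ/2 : ℝ):ℂ) + (s:ℂ)*Complex.I) with hAdef
        set B := Fup F ((z.re:ℂ) + (s:ℂ)*Complex.I) with hBdef
        have hca : (starRingEnd ℂ) a = -Complex.I * a := conj_projDn _
        have key : (starRingEnd ℂ) a * (Complex.I/(δ:ℂ)*(A - B)) = (a*A - a*B)/(δ:ℂ) := by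
          rw [hca]
          linear_combination (-(a*(A - B))/(δ:ℂ)) * Complex.I_mul_I
        rw [key]
        simp only [Complex.div_ofReal_re, Complex.sub_re]
        field_simp
      rw [hval]
      exact hN'
    have hint : ∫ s in t0..z.im, (g (z.re + δ/2) (clamp s) - g z.re (clamp s))
        = N z.im - N t0 :=
      ftc_Icc (hc2.sub (hgcc z hzU)) hNcont hderd ht0 ⟨him1, him2⟩
    have hsub : ∫ s in t0..z.im, (g (z.re + δ/2) (clamp s) - g z.re (clamp s))
        = (∫ s in t0..z.im, g (z.re + δ/2) (clamp s)) - ∫ s in t0..z.im, g z.re (clamp s) :=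
      intervalIntegral.integral_sub (hc2.intervalIntegrable _ _)
        ((hgcc z hzU).intervalIntegrable _ _)
    have hC := hCstep (2*k+1) (by omega)
    have hstep1 : step (2*k+1) = N t0 := by
      have hpt : δ*(((2*k+1 : ℤ)):ℝ)/2 = z.re := by rw [hre]; push_cast; ring
      have hodd : ¬ Even (2*k+1 : ℤ) := by
        simp [Int.even_add_one, Int.even_mul]
      simp only [hstepdef, hNdef, if_neg hodd, hpt]
    have hNz : N z.im = ‖Fdn F z‖^2 := by
      simp only [hNdef]
      rw [Complex.re_add_im]
    have h22 : (2*k+2 : ℤ) = 2*k+1+1 := by ring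
    rw [hv1, hv2, h22, hC]
    rw [hsub] at hint
    linear_combination hint + hstep1 + hNz
  · -- black increment
    rintro z ⟨⟨k, hmk, hkn, hre⟩, him1, him2⟩ hw
    have hzb : z ∈ BlackPts δ m n c d := ⟨⟨k, hmk, hkn, hre⟩, him1, him2⟩
    have hzU : z ∈ BlackPts δ m n c d ∪ WhitePts δ m n c d := Or.inl hzb
    have hwU : z + ((δ/2 : ℝ):ℂ) ∈ BlackPts δ m n c d ∪ WhitePts δ m n c d := Or.inr hw
    have hure : (z + ((δ/2:ℝ):ℂ)).re = z.re + δ/2 := by simp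
    obtain ⟨⟨k', hmk', hk'n, hre'⟩, _, _⟩ := hw
    rw [hure] at hre'
    have hz_eq : z = (z.re:ℂ) + (z.im:ℂ)*Complex.I := (Complex.re_add_im z).symm
    have hu_eq : z + ((δ/2:ℝ):ℂ) = ((z.re + δ/2 : ℝ):ℂ) + ((z.im:ℝ):ℂ)*Complex.I := by
      push_cast
      linear_combination (Complex.re_add_im z).symm
    have hq1 : 2*z.re/δ = ((2*k : ℤ) : ℝ) := by
      rw [hre]; push_cast; field_simp
    have hq2 : 2*(z.re + δ/2)/δ = ((2*k+1 : ℤ) : ℝ) := by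
      rw [hre]; push_cast; field_simp
    have hv1 : H z = C (2*k) + ∫ s in t0..z.im, g z.re (clamp s) := by
      nth_rewrite 1 [hz_eq]
      rw [hHval, hq1, round_intCast]
    have hv2 : H (z + ((δ/2:ℝ):ℂ))
        = C (2*k+1) + ∫ s in t0..z.im, g (z.re + δ/2) (clamp s) := by
      rw [hu_eq, hHval, hq2, round_intCast]
    set N : ℝ → ℝ := fun t => -‖Fup F ((z.re:ℂ) + (t:ℂ)*Complex.I)‖^2 with hNdef
    have hNcont : ContinuousOn N (Set.Icc c d) := by
      have houter : Continuous (fun w : ℂ => -‖projUp w‖^2) := ((continuous_projUp.norm).pow 2).neg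
      exact houter.comp_continuousOn (hFcont z hzU)
    have hc2 : Continuous (fun s => g (z.re + δ/2) (clamp s)) := by
      have := hgcc _ hwU
      rwa [hure] at this
    have hderd : ∀ s ∈ Set.Ioo c d,
        HasDerivAt N (g (z.re + δ/2) (clamp s) - g z.re (clamp s)) s := by
      intro s hs
      have hwmem : ∀ t ∈ Set.Ioo c d,
          ((z.re + δ/2 : ℝ):ℂ) + (t:ℂ)*Complex.I ∈ IntWhitePts δ m n c d := by
        intro t ht
        refine ⟨⟨k', hmk', hk'n, ?_⟩, by simpa using ht.1, by simpa using ht.2⟩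
        simpa using hre'
      obtain ⟨h1, h2, h3, h4⟩ := hshW _ (hwmem s hs)
      have hE := vderiv_shift h3
      have hpt1 : ∀ t : ℝ, ((z.re + δ/2:ℝ):ℂ) + (t:ℂ)*Complex.I - ((δ/2:ℝ):ℂ)
          = (z.re:ℂ) + (t:ℂ)*Complex.I := by intro t; push_cast; ring
      have hev : (fun t : ℝ => Fup F ((z.re:ℂ) + (t:ℂ)*Complex.I))
          =ᶠ[nhds s] (fun t : ℝ => Fup F (((z.re + δ/2:ℝ):ℂ) + (t:ℂ)*Complex.I)) := by
        filter_upwards [Ioo_mem_nhds hs.1 hs.2] with t ht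
        have h1t := (hshW _ (hwmem t ht)).1
        rw [hpt1 t] at h1t
        exact h1t.symm
      have hE' := hE.congr_of_eventuallyEq hev
      have hN' : HasDerivAt N (-(2 * ((starRingEnd ℂ)
          (Fup F ((z.re:ℂ) + (s:ℂ)*Complex.I))
          * (Complex.I / δ * (Fdn F (((z.re + δ/2:ℝ):ℂ) + (s:ℂ)*Complex.I + ((δ/2 : ℝ):ℂ))
              - Fdn F (((z.re + δ/2:ℝ):ℂ) + (s:ℂ)*Complex.I - ((δ/2 : ℝ):ℂ))))).re)) s := by
        simp only [hNdef]
        exact (hasDerivAt_norm_sq hE').neg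
      have hval : g (z.re + δ/2) (clamp s) - g z.re (clamp s)
          = -(2 * ((starRingEnd ℂ)
          (Fup F ((z.re:ℂ) + (s:ℂ)*Complex.I))
          * (Complex.I / δ * (Fdn F (((z.re + δ/2:ℝ):ℂ) + (s:ℂ)*Complex.I + ((δ/2 : ℝ):ℂ))
              - Fdn F (((z.re + δ/2:ℝ):ℂ) + (s:ℂ)*Complex.I - ((δ/2 : ℝ):ℂ))))).re) := by
        rw [hclamp_id s ⟨le_of_lt hs.1, le_of_lt hs.2⟩]
        simp only [hgdef]
        rw [hpt1 s] at h1 ⊢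
        rw [← h2, h1]
        set a := Fup F ((z.re:ℂ) + (s:ℂ)*Complex.I) with hadef
        set A := Fdn F (((z.re + δ/2 : ℝ):ℂ) + (s:ℂ)*Complex.I) with hAdef
        set B := Fdn F ((z.re:ℂ) + (s:ℂ)*Complex.I) with hBdef
        have hca : (starRingEnd ℂ) a = Complex.I * a := conj_projUp _
        have key : (starRingEnd ℂ) a * (Complex.I/(δ:ℂ)*(A - B)) = -((a*A - a*B)/(δ:ℂ)) := by
          rw [hca]
          linear_combination (a*(A - B)/(δ:ℂ)) * Complex.I_mul_I
        rw [key]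
        simp only [Complex.neg_re, Complex.div_ofReal_re, Complex.sub_re]
        field_simp
      rw [hval]
      exact hN'
    have hint : ∫ s in t0..z.im, (g (z.re + δ/2) (clamp s) - g z.re (clamp s))
        = N z.im - N t0 :=
      ftc_Icc (hc2.sub (hgcc z hzU)) hNcont hderd ht0 ⟨him1, him2⟩
    have hsub : ∫ s in t0..z.im, (g (z.re + δ/2) (clamp s) - g z.re (clamp s))
        = (∫ s in t0..z.im, g (z.re + δ/2) (clamp s)) - ∫ s in t0..z.im, g z.re (clamp s) :=
      intervalIntegral.integral_sub (hc2.intervalIntegrable _ _)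
        ((hgcc z hzU).intervalIntegrable _ _)
    have hC := hCstep (2*k) (by omega)
    have hstep1 : step (2*k) = N t0 := by
      have hpt : δ*(((2*k : ℤ)):ℝ)/2 = z.re := by rw [hre]; push_cast; ring
      have heven : Even (2*k : ℤ) := ⟨k, by ring⟩
      simp only [hstepdef, hNdef, if_pos heven, hpt]
    have hNz : N z.im = -‖Fup F z‖^2 := by
      simp only [hNdef]
      rw [Complex.re_add_im]
    rw [hv1, hv2, hC]
    rw [hsub] at hint
    linear_combination hint + hstep1 + hNz
  · -- vertical derivative
    intro z hz h1 h2
    refine ⟨g z.re z.im, ?_, ?_⟩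
    · show HasDerivAt (fun t : ℝ => H (z + (t:ℂ)*Complex.I)) (g z.re z.im) 0
      have heq : (fun t : ℝ => H (z + (t:ℂ)*Complex.I))
          = fun t : ℝ => C (round (2*z.re/δ)) + ∫ s in t0..(z.im + t), g z.re (clamp s) := by
        funext t
        have hzt : z + (t:ℂ)*Complex.I = ((z.re:ℝ):ℂ) + ((z.im + t : ℝ):ℂ)*Complex.I := by
          push_cast
          linear_combination (Complex.re_add_im z).symm
        rw [hzt, hHval]
      rw [heq]
      have hP := hprim z hz (z.im + 0)
      have hin : HasDerivAt (fun t : ℝ => z.im + t) 1 0 := (hasDerivAt_id 0).const_add z.im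
      have hcomp := HasDerivAt.comp 0 hP hin
      have hvv : g z.re (clamp (z.im + 0)) * 1 = g z.re z.im := by
        rw [mul_one, add_zero, hclamp_id z.im ⟨le_of_lt h1, le_of_lt h2⟩]
      rw [hvv] at hcomp
      have := hcomp.const_add (C (round (2*z.re/δ)))
      simpa [Function.comp] using this
    · have hreal : (starRingEnd ℂ) (Fup F z * Fdn F z) = Fup F z * Fdn F z := by
        rw [map_mul]
        have e1 : (starRingEnd ℂ) (Fup F z) = Complex.I * Fup F z := conj_projUp _
        have e2 : (starRingEnd ℂ) (Fdn F z) = -Complex.I * Fdn F z := conj_projDn _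
        rw [e1, e2]
        linear_combination (-(Fup F z * Fdn F z)) * Complex.I_mul_I
      have hcast : ((Fup F z * Fdn F z).re : ℂ) = Fup F z * Fdn F z :=
        Complex.conj_eq_iff_re.mp hreal
      simp only [hgdef, Complex.re_add_im]
      push_cast
      rw [hcast]
      ring
end
end

section
/- Uniqueness part of the key property of s-holomorphic functions (Proposition 3.3, uniqueness): Fix δ > 0, integers m < n and reals c < d, and let Ω^•, Ω^∘ be the black and white points of the discrete rectangular domain Ω_δ. Let F : ℂ → ℂ be continuous on each vertical segment of Ω^• ∪ Ω^∘, and suppose H₁, H₂ : Ω^• ∪ Ω^∘ → ℝ are continuous on each vertical segment of Ω^• ∪ Ω^∘ and both satisfy: (a) for every white point z ∈ Ω^∘ with z + δ/2 ∈ Ω^•, H(z + δ/2) − H(z) = |F^↓(z)|², and for every black point z ∈ Ω^• with z + δ/2 ∈ Ω^∘, H(z + δ/2) − H(z) = −|F^↑(z)|²; and (b) at every point z ∈ Ω^• ∪ Ω^∘ with c < Im z < d, the vertical derivative Ḣ(z) exists and equals (2/δ)·F^↑(z)·F^↓(z). Then H₁ − H₂ is constant on Ω^• ∪ Ω^∘.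 -/
noncomputable section

/-- A real function continuous on `[c,d]` with zero derivative on `(c,d)` is constant. -/
lemma const_of_deriv_zero_icc {g : ℝ → ℝ} {c d : ℝ}
    (hg : ContinuousOn g (Set.Icc c d))
    (hder : ∀ t ∈ Set.Ioo c d, HasDerivAt g 0 t) :
    ∀ t ∈ Set.Icc c d, g t = g c := by
  intro t ht
  rcases eq_or_lt_of_le ht.1 with h | h
  · rw [← h]
  · have key : ∀ c' ∈ Set.Ioc c t, g t = g c' := by
      intro c' hc'
      have h1 : ContinuousOn g (Set.Icc c' t) :=
        hg.mono (Set.Icc_subset_Icc hc'.1.le ht.2)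
      have h2 : ∀ x ∈ Set.Ico c' t, HasDerivWithinAt g 0 (Set.Ici x) x := by
        intro x hx
        exact (hder x ⟨lt_of_lt_of_le hc'.1 hx.1,
          lt_of_lt_of_le hx.2 ht.2⟩).hasDerivWithinAt
      exact constant_of_has_deriv_right_zero h1 h2 t (Set.right_mem_Icc.2 hc'.2)
    have hCW : ContinuousWithinAt g (Set.Icc c d) c := hg c ⟨le_refl c, le_trans h.le ht.2⟩
    have hsub : Set.Ioc c t ⊆ Set.Icc c d := fun x hx => ⟨hx.1.le, le_trans hx.2 ht.2⟩
    have h3 : Filter.Tendsto g (nhdsWithin c (Set.Ioc c t)) (nhds (g c)) := hCW.mono hsub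
    have h4 : Filter.Tendsto g (nhdsWithin c (Set.Ioc c t)) (nhds (g t)) := by
      refine Filter.Tendsto.congr' ?_ tendsto_const_nhds
      filter_upwards [self_mem_nhdsWithin] with x hx
      exact key x hx
    haveI : (nhdsWithin c (Set.Ioc c t)).NeBot := by
      refine mem_closure_iff_nhdsWithin_neBot.mp ?_
      rw [closure_Ioc h.ne]
      exact Set.left_mem_Icc.2 h.le
    exact (tendsto_nhds_unique h3 h4).symm

/-- Proposition 3.3 (uniqueness part): two functions `H₁, H₂`, continuous on vertical
segments and both satisfying the increment relations (a) and the vertical-derivative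
relation (b), differ by a constant on `Ω^• ∪ Ω^∘`. -/
theorem sholomorphic_H_unique
    (δ : ℝ) (hδ : 0 < δ) (m n : ℤ) (hmn : m < n) (c d : ℝ) (hcd : c < d)
    (F : ℂ → ℂ)
    (hFcont : ∀ z ∈ BlackPts δ m n c d ∪ WhitePts δ m n c d,
      ContinuousOn (fun t : ℝ => F ((z.re : ℂ) + (t : ℂ) * Complex.I)) (Set.Icc c d))
    (H₁ H₂ : ℂ → ℝ)
    (hHcont : ∀ H ∈ ({H₁, H₂} : Set (ℂ → ℝ)), ∀ z ∈ BlackPts δ m n c d ∪ WhitePts δ m n c d,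
      ContinuousOn (fun t : ℝ => H ((z.re : ℂ) + (t : ℂ) * Complex.I)) (Set.Icc c d))
    (ha₁ : ∀ H ∈ ({H₁, H₂} : Set (ℂ → ℝ)), ∀ z ∈ WhitePts δ m n c d,
      z + (δ / 2 : ℝ) ∈ BlackPts δ m n c d →
        H (z + (δ / 2 : ℝ)) - H z = ‖Fdn F z‖ ^ 2)
    (ha₂ : ∀ H ∈ ({H₁, H₂} : Set (ℂ → ℝ)), ∀ z ∈ BlackPts δ m n c d,
      z + (δ / 2 : ℝ) ∈ WhitePts δ m n c d →
        H (z + (δ / 2 : ℝ)) - H z = -‖Fup F z‖ ^ 2)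
    (hb : ∀ H ∈ ({H₁, H₂} : Set (ℂ → ℝ)), ∀ z ∈ BlackPts δ m n c d ∪ WhitePts δ m n c d,
      c < z.im → z.im < d →
        ∃ r : ℝ, HasVDerivAt H r z ∧ (r : ℂ) = 2 / δ * Fup F z * Fdn F z) :
    ∃ C : ℝ, ∀ z ∈ BlackPts δ m n c d ∪ WhitePts δ m n c d, H₁ z - H₂ z = C := by
  classical
  set Ω := BlackPts δ m n c d ∪ WhitePts δ m n c d with hΩ
  set G : ℂ → ℝ := fun z => H₁ z - H₂ z with hGdef
  have hH₁ : H₁ ∈ ({H₁, H₂} : Set (ℂ → ℝ)) := Set.mem_insert _ _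
  have hH₂ : H₂ ∈ ({H₁, H₂} : Set (ℂ → ℝ)) := Set.mem_insert_of_mem _ rfl
  -- membership is invariant along vertical segments
  have hmem : ∀ z ∈ Ω, ∀ t ∈ Set.Icc c d, ((z.re : ℂ) + (t : ℂ) * Complex.I) ∈ Ω := by
    intro z hz t ht
    have hre : ((z.re : ℂ) + (t : ℂ) * Complex.I).re = z.re := by simp
    have him : ((z.re : ℂ) + (t : ℂ) * Complex.I).im = t := by simp
    rcases hz with ⟨⟨k, hk1, hk2, hk3⟩, -, -⟩ | ⟨⟨k, hk1, hk2, hk3⟩, -, -⟩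
    · exact Or.inl ⟨⟨k, hk1, hk2, by rw [hre, hk3]⟩, by rw [him]; exact ht.1,
        by rw [him]; exact ht.2⟩
    · exact Or.inr ⟨⟨k, hk1, hk2, by rw [hre, hk3]⟩, by rw [him]; exact ht.1,
        by rw [him]; exact ht.2⟩
  -- vertical constancy of G
  have vert : ∀ z ∈ Ω, ∀ t ∈ Set.Icc c d,
      G ((z.re : ℂ) + (t : ℂ) * Complex.I) = G ((z.re : ℂ) + (c : ℂ) * Complex.I) := by
    intro z hz
    apply const_of_deriv_zero_icc
    · exact (hHcont H₁ hH₁ z hz).sub (hHcont H₂ hH₂ z hz)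
    · intro t ht
      set w : ℂ := (z.re : ℂ) + (t : ℂ) * Complex.I with hw
      have hwΩ : w ∈ Ω := hmem z hz t ⟨ht.1.le, ht.2.le⟩
      have hwim : w.im = t := by simp [hw]
      obtain ⟨r₁, hr₁, e₁⟩ := hb H₁ hH₁ w hwΩ (by rw [hwim]; exact ht.1)
        (by rw [hwim]; exact ht.2)
      obtain ⟨r₂, hr₂, e₂⟩ := hb H₂ hH₂ w hwΩ (by rw [hwim]; exact ht.1)
        (by rw [hwim]; exact ht.2)
      have hr : r₂ = r₁ := by exact_mod_cast e₂.trans e₁.symm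
      subst hr
      have shift : ∀ (H : ℂ → ℝ) (r : ℝ), HasVDerivAt H r w →
          HasDerivAt (fun s : ℝ => H ((z.re : ℂ) + (s : ℂ) * Complex.I)) r t := by
        intro H r hH
        have h1 : HasDerivAt (fun s : ℝ => s - t) 1 t := by
          simpa using (hasDerivAt_id t).sub_const t
        have hH' : HasDerivAt (fun s : ℝ => H (w + (s : ℂ) * Complex.I)) r
            ((fun s : ℝ => s - t) t) := by simp only [sub_self]; exact hH
        have h2 : HasDerivAt ((fun s : ℝ => H (w + (s : ℂ) * Complex.I)) ∘ (fun s : ℝ => s - t))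
            (r * 1) t := HasDerivAt.comp t hH' h1
        have heq : ((fun s : ℝ => H (w + (s : ℂ) * Complex.I)) ∘ (fun s : ℝ => s - t))
            = fun s : ℝ => H ((z.re : ℂ) + (s : ℂ) * Complex.I) := by
          funext s
          simp only [Function.comp]
          congr 1
          rw [hw]
          push_cast
          ring
        rw [heq] at h2
        simpa using h2
      have d1 := shift H₁ r₂ hr₁
      have d2 := shift H₂ r₂ hr₂
      have := d1.sub d2; rw [sub_self] at this; exact this
  -- points at height c
  set B : ℤ → ℂ := fun k => ((δ * (k : ℝ) : ℝ) : ℂ) + (c : ℂ) * Complex.I with hB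
  set W : ℤ → ℂ := fun k => ((δ * ((k : ℝ) + 1 / 2) : ℝ) : ℂ) + (c : ℂ) * Complex.I with hW
  have hBmem : ∀ k : ℤ, m ≤ k → k ≤ n → B k ∈ BlackPts δ m n c d := by
    intro k h1 h2
    exact ⟨⟨k, h1, h2, by simp [hB]⟩, by simp [hB], by simp [hB, hcd.le]⟩
  have hWmem : ∀ k : ℤ, m ≤ k → k ≤ n - 1 → W k ∈ WhitePts δ m n c d := by
    intro k h1 h2
    exact ⟨⟨k, h1, h2, by simp [hW]⟩, by simp [hW], by simp [hW, hcd.le]⟩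
  -- horizontal increment cancellations
  have stepBW : ∀ k : ℤ, m ≤ k → k ≤ n - 1 → G (W k) = G (B k) := by
    intro k h1 h2
    have hBW : B k + ((δ / 2 : ℝ) : ℂ) = W k := by
      rw [hB, hW]; push_cast; ring
    have hmemB : B k ∈ BlackPts δ m n c d := hBmem k h1 (by omega)
    have hmemW : B k + ((δ / 2 : ℝ) : ℂ) ∈ WhitePts δ m n c d := by
      rw [hBW]; exact hWmem k h1 h2
    have e1 := ha₂ H₁ hH₁ (B k) hmemB hmemW
    have e2 := ha₂ H₂ hH₂ (B k) hmemB hmemW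
    have : H₁ (B k + ((δ / 2 : ℝ) : ℂ)) - H₁ (B k)
        = H₂ (B k + ((δ / 2 : ℝ) : ℂ)) - H₂ (B k) := by rw [e1, e2]
    rw [hBW] at this
    simp only [hGdef]
    linarith
  have stepWB : ∀ k : ℤ, m ≤ k → k ≤ n - 1 → G (B (k + 1)) = G (W k) := by
    intro k h1 h2
    have hWB : W k + ((δ / 2 : ℝ) : ℂ) = B (k + 1) := by
      rw [hB, hW]; push_cast; ring
    have hmemW : W k ∈ WhitePts δ m n c d := hWmem k h1 h2
    have hmemB : W k + ((δ / 2 : ℝ) : ℂ) ∈ BlackPts δ m n c d := by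
      rw [hWB]; exact hBmem (k + 1) (by omega) (by omega)
    have e1 := ha₁ H₁ hH₁ (W k) hmemW hmemB
    have e2 := ha₁ H₂ hH₂ (W k) hmemW hmemB
    have : H₁ (W k + ((δ / 2 : ℝ) : ℂ)) - H₁ (W k)
        = H₂ (W k + ((δ / 2 : ℝ) : ℂ)) - H₂ (W k) := by rw [e1, e2]
    rw [hWB] at this
    simp only [hGdef]
    linarith
  -- chain along the bottom row
  have chainB : ∀ k : ℤ, m ≤ k → k ≤ n → G (B k) = G (B m) := by
    intro k hk
    refine Int.le_induction (motive := fun j _ => j ≤ n → G (B j) = G (B m)) ?_ ?_ k hk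
    · intro _; rfl
    · intro j hj ih hjn
      have h2 : j ≤ n - 1 := by omega
      rw [stepWB j hj h2, stepBW j hj h2, ih (by omega)]
  have chainW : ∀ k : ℤ, m ≤ k → k ≤ n - 1 → G (W k) = G (B m) := by
    intro k h1 h2
    rw [stepBW k h1 h2, chainB k h1 (by omega)]
  -- conclude
  refine ⟨G (B m), ?_⟩
  intro z hz
  have him : c ≤ z.im ∧ z.im ≤ d := by
    rcases hz with ⟨-, h1, h2⟩ | ⟨-, h1, h2⟩ <;> exact ⟨h1, h2⟩
  have hz' : G z = G ((z.re : ℂ) + (c : ℂ) * Complex.I) := by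
    have := vert z hz z.im ⟨him.1, him.2⟩
    rwa [Complex.re_add_im] at this
  show G z = G (B m)
  rw [hz']
  rcases hz with ⟨⟨k, hk1, hk2, hk3⟩, -, -⟩ | ⟨⟨k, hk1, hk2, hk3⟩, -, -⟩
  · have : ((z.re : ℂ) + (c : ℂ) * Complex.I) = B k := by
      rw [hB, hk3]
    rw [this]; exact chainB k hk1 hk2
  · have : ((z.re : ℂ) + (c : ℂ) * Complex.I) = W k := by
      rw [hW, hk3]
    rw [this]; exact chainW k hk1 hk2
end
end

section
/- Local Laplacian identity at a black point (from the proof of Proposition 3.3): Let δ > 0, u ∈ ℂ, F : ℂ → ℂ and H : ℂ → ℝ. Assume: (i) F is s-holomorphic at the black point u; (ii) there is a neighbourhood of 0 in ℝ such that for all t in it the vertical derivative Ḣ(u + it) exists and equals (2/δ)·F^↑(u + it)·F^↓(u + it); (iii) H(u − δ) − H(u) = |F^↑(u − δ/2)|² − |F^↓(u − δ/2)|² and H(u + δ) − H(u) = |F^↓(u + δ/2)|² − |F^↑(u + δ/2)|². Then the second vertical derivative Ḧ(u) exists and Ḧ(u) + (1/δ²)·(H(u + δ) + H(u − δ) − 2·H(u))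 = (1/δ²)·|F(u + δ/2) − F(u − δ/2)|². -/
noncomputable section

private lemma key_alg (δ : ℝ) (hδ : δ ≠ 0) (A B : ℂ) :
    (2/(δ:ℂ) * ((Complex.I/δ * (projDn A - projDn B)) * projDn B
        + projUp A * (Complex.I/δ * (projUp A - projUp B)))).re
      + 1/δ^2 * ((Complex.normSq (projDn A) - Complex.normSq (projUp A))
        + (Complex.normSq (projUp B) - Complex.normSq (projDn B)))
    = 1/δ^2 * Complex.normSq (A - B) := by
  have h1 : (2/(δ:ℂ) * ((Complex.I/δ * (projDn A - projDn B)) * projDn B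
        + projUp A * (Complex.I/δ * (projUp A - projUp B))))
      = ((2/δ^2 : ℝ):ℂ) * (Complex.I * (projDn A - projDn B) * projDn B
        + projUp A * (Complex.I * (projUp A - projUp B))) := by
    push_cast
    ring
  have h2 : ∀ x : ℝ, 1/δ^2 * x = (2/δ^2) * (x/2) := by intro x; field_simp
  rw [h1, Complex.re_ofReal_mul, h2, h2, ← mul_add]
  congr 1
  simp [projUp, projDn, Complex.normSq_apply, Complex.mul_re, Complex.mul_im,
    Complex.div_re, Complex.div_im, Complex.add_re, Complex.add_im,
    Complex.sub_re, Complex.sub_im]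
  ring

/-- Local Laplacian identity at a black point (from the proof of Proposition 3.3). -/
theorem local_laplacian_black
    (δ : ℝ) (hδ : 0 < δ) (u : ℂ) (F : ℂ → ℂ) (H : ℂ → ℝ)
    (hsh : SHolBlack δ F u)
    (hH' : ∀ᶠ t in nhds (0 : ℝ), ∃ r : ℝ,
      HasVDerivAt H r (u + (t : ℂ) * Complex.I) ∧
      (r : ℂ) = 2 / δ * Fup F (u + (t : ℂ) * Complex.I) * Fdn F (u + (t : ℂ) * Complex.I))
    (hleft : H (u - (δ : ℝ)) - H u
      = ‖Fup F (u - (δ / 2 : ℝ))‖ ^ 2 - ‖Fdn F (u - (δ / 2 : ℝ))‖ ^ 2)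
    (hright : H (u + (δ : ℝ)) - H u
      = ‖Fdn F (u + (δ / 2 : ℝ))‖ ^ 2 - ‖Fup F (u + (δ / 2 : ℝ))‖ ^ 2) :
    ∃ h2 : ℝ, HasVDeriv2At H h2 u ∧
      h2 + 1 / δ ^ 2 * (H (u + (δ : ℝ)) + H (u - (δ : ℝ)) - 2 * H u)
        = 1 / δ ^ 2 * ‖F (u + (δ / 2 : ℝ)) - F (u - (δ / 2 : ℝ))‖ ^ 2 := by
  obtain ⟨hup, hdn, hdup, hddn⟩ := hsh
  set A := F (u + (δ / 2 : ℝ)) with hA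
  set B := F (u - (δ / 2 : ℝ)) with hB
  have hδ' : δ ≠ 0 := ne_of_gt hδ
  -- the vertical derivative of H, as a function
  set G' : ℂ → ℝ := fun z => (2 / (δ:ℂ) * Fup F z * Fdn F z).re with hG'
  -- derivative data at u
  set dup : ℂ := Complex.I / δ * (Fdn F (u + (δ / 2 : ℝ)) - Fdn F (u - (δ / 2 : ℝ))) with hdupdef
  set ddn : ℂ := Complex.I / δ * (Fup F (u + (δ / 2 : ℝ)) - Fup F (u - (δ / 2 : ℝ))) with hddndef
  set h2 : ℝ := (2 / (δ:ℂ) * (dup * Fdn F u + Fup F u * ddn)).re with hh2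
  refine ⟨h2, ⟨G', ?_, ?_⟩, ?_⟩
  · -- eventually, G' is the vertical derivative of H
    filter_upwards [hH'] with t ht
    obtain ⟨r, hr, hrval⟩ := ht
    have : G' (u + (t : ℂ) * Complex.I) = r := by
      rw [hG']
      simp only
      rw [← hrval, Complex.ofReal_re]
    rwa [this]
  · -- G' has vertical derivative h2 at u
    have hmul : HasDerivAt
        (fun t : ℝ => Fup F (u + (t : ℂ) * Complex.I) * Fdn F (u + (t : ℂ) * Complex.I))
        (dup * Fdn F (u + ((0:ℝ) : ℂ) * Complex.I)
          + Fup F (u + ((0:ℝ) : ℂ) * Complex.I) * ddn) 0 := by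
      have h1 : HasDerivAt (fun t : ℝ => Fup F (u + (t : ℂ) * Complex.I)) dup 0 := hdup
      have h2' : HasDerivAt (fun t : ℝ => Fdn F (u + (t : ℂ) * Complex.I)) ddn 0 := hddn
      simpa using h1.fun_mul h2'
    have hmul' : HasDerivAt
        (fun t : ℝ => 2 / (δ:ℂ) * Fup F (u + (t : ℂ) * Complex.I) * Fdn F (u + (t : ℂ) * Complex.I))
        (2 / (δ:ℂ) * (dup * Fdn F u + Fup F u * ddn)) 0 := by
      have h := hmul.const_mul (2 / (δ:ℂ))
      simp only [Complex.ofReal_zero, zero_mul, add_zero] at h ⊢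
      have heq : (fun t : ℝ => 2 / (δ:ℂ) * Fup F (u + (t : ℂ) * Complex.I)
            * Fdn F (u + (t : ℂ) * Complex.I))
          = fun t : ℝ => 2 / (δ:ℂ) * (Fup F (u + (t : ℂ) * Complex.I)
            * Fdn F (u + (t : ℂ) * Complex.I)) := by
        funext t; ring
      rw [heq]
      exact h
    have := Complex.reCLM.hasFDerivAt.comp_hasDerivAt 0 hmul'
    exact this
  · -- the algebraic identity
    have hnorm : ∀ z : ℂ, ‖z‖ ^ 2 = Complex.normSq z := by
      intro z; rw [Complex.sq_norm]
    have hsum : H (u + (δ : ℝ)) + H (u - (δ : ℝ)) - 2 * H u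
        = (Complex.normSq (projDn A) - Complex.normSq (projUp A))
          + (Complex.normSq (projUp B) - Complex.normSq (projDn B)) := by
      have hl := hleft; have hr := hright
      rw [hnorm, hnorm] at hl hr
      simp only [Fup, Fdn, ← hA, ← hB] at hl hr
      linarith
    rw [hsum, hnorm]
    have hh2' : h2 = (2/(δ:ℂ) * ((Complex.I/δ * (projDn A - projDn B)) * projDn B
        + projUp A * (Complex.I/δ * (projUp A - projUp B)))).re := by
      rw [hh2, hdupdef, hddndef, hup, hdn]
      simp only [Fup, Fdn, ← hA, ← hB]
    rw [hh2']
    exact key_alg δ hδ' A B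
end
end

section
/- Local Laplacian identity at a white point (from the proof of Proposition 3.3): Let δ > 0, w ∈ ℂ, F : ℂ → ℂ and H : ℂ → ℝ. Assume: (i) F is s-holomorphic at the white point w; (ii) there is a neighbourhood of 0 in ℝ such that for all t in it the vertical derivative Ḣ(w + it) exists and equals (2/δ)·F^↑(w + it)·F^↓(w + it); (iii) H(w − δ) − H(w) = |F^↑(w − δ/2)|² − |F^↓(w − δ/2)|² and H(w + δ) − H(w) = |F^↓(w + δ/2)|² − |F^↑(w + δ/2)|². Then the second vertical derivative Ḧ(w) exists and Ḧ(w) + (1/δ²)·(H(w + δ) + H(w − δ) − 2·H(w)) = −(1/δ²)·|F(w + δ/2) − F(w − δ/2)|². -/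
noncomputable section

lemma projUp_eq (x : ℂ) : projUp x = (((x.re - x.im) / 2 : ℝ)) * (1 - Complex.I) := by
  apply Complex.ext <;> simp [projUp] <;> ring

lemma projDn_eq (x : ℂ) : projDn x = (((x.re + x.im) / 2 : ℝ)) * (1 + Complex.I) := by
  apply Complex.ext <;> simp [projDn] <;> ring

lemma proj_add (x : ℂ) : projUp x + projDn x = x := by
  simp only [projUp, projDn]; ring

lemma normsq_eq (z : ℂ) : ‖z‖ ^ 2 = z.re ^ 2 + z.im ^ 2 := by
  rw [Complex.sq_norm, Complex.normSq_apply]; ring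

/-- Local Laplacian identity at a white point (from the proof of Proposition 3.3). -/
theorem local_laplacian_white
    (δ : ℝ) (hδ : 0 < δ) (w : ℂ) (F : ℂ → ℂ) (H : ℂ → ℝ)
    (hsh : SHolWhite δ F w)
    (hH' : ∀ᶠ t in nhds (0 : ℝ), ∃ r : ℝ,
      HasVDerivAt H r (w + (t : ℂ) * Complex.I) ∧
      (r : ℂ) = 2 / δ * Fup F (w + (t : ℂ) * Complex.I) * Fdn F (w + (t : ℂ) * Complex.I))
    (hleft : H (w - (δ : ℝ)) - H w
      = ‖Fup F (w - (δ / 2 : ℝ))‖ ^ 2 - ‖Fdn F (w - (δ / 2 : ℝ))‖ ^ 2)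
    (hright : H (w + (δ : ℝ)) - H w
      = ‖Fdn F (w + (δ / 2 : ℝ))‖ ^ 2 - ‖Fup F (w + (δ / 2 : ℝ))‖ ^ 2) :
    ∃ h2 : ℝ, HasVDeriv2At H h2 w ∧
      h2 + 1 / δ ^ 2 * (H (w + (δ : ℝ)) + H (w - (δ : ℝ)) - 2 * H w)
        = -(1 / δ ^ 2 * ‖F (w + (δ / 2 : ℝ)) - F (w - (δ / 2 : ℝ))‖ ^ 2) := by
  obtain ⟨hw1, hw2, hup, hdn⟩ := hsh
  have hδ0 : (δ : ℂ) ≠ 0 := by exact_mod_cast hδ.ne'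
  have hδ0' : δ ≠ 0 := hδ.ne'
  set α : ℝ := ((F (w - (δ / 2 : ℝ))).re - (F (w - (δ / 2 : ℝ))).im) / 2 with hαdef
  set α' : ℝ := ((F (w + (δ / 2 : ℝ))).re - (F (w + (δ / 2 : ℝ))).im) / 2 with hα'def
  set β : ℝ := ((F (w + (δ / 2 : ℝ))).re + (F (w + (δ / 2 : ℝ))).im) / 2 with hβdef
  set β' : ℝ := ((F (w - (δ / 2 : ℝ))).re + (F (w - (δ / 2 : ℝ))).im) / 2 with hβ'def
  have ha : Fup F (w - (δ / 2 : ℝ)) = (α : ℂ) * (1 - Complex.I) := projUp_eq _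
  have ha' : Fup F (w + (δ / 2 : ℝ)) = (α' : ℂ) * (1 - Complex.I) := projUp_eq _
  have hb : Fdn F (w + (δ / 2 : ℝ)) = (β : ℂ) * (1 + Complex.I) := projDn_eq _
  have hb' : Fdn F (w - (δ / 2 : ℝ)) = (β' : ℂ) * (1 + Complex.I) := projDn_eq _
  set D : ℂ := 2 / (δ : ℂ) *
      ((Complex.I / δ * (Fdn F (w + (δ / 2 : ℝ)) - Fdn F (w - (δ / 2 : ℝ)))) * Fdn F w
        + Fup F w * (Complex.I / δ * (Fup F (w + (δ / 2 : ℝ)) - Fup F (w - (δ / 2 : ℝ))))) with hD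
  -- the complex product has vertical derivative D at w
  have hg : HasDerivAt
      (fun t : ℝ => 2 / (δ : ℂ) * Fup F (w + (t : ℂ) * Complex.I) * Fdn F (w + (t : ℂ) * Complex.I))
      D 0 := by
    have h1 := (HasDerivAt.mul hup hdn).const_mul (2 / (δ : ℂ))
    simpa [hD, mul_assoc] using h1
  have hG' : HasVDerivAt (fun z => (2 / (δ : ℂ) * Fup F z * Fdn F z).re) D.re w :=
    Complex.reCLM.hasFDerivAt.comp_hasDerivAt 0 hg
  have hev : ∀ᶠ t in nhds (0 : ℝ), HasVDerivAt H
      ((fun z => (2 / (δ : ℂ) * Fup F z * Fdn F z).re) (w + (t : ℂ) * Complex.I))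
      (w + (t : ℂ) * Complex.I) := by
    filter_upwards [hH'] with t ht
    obtain ⟨r, hr, hre⟩ := ht
    have : (2 / (δ : ℂ) * Fup F (w + (t : ℂ) * Complex.I) * Fdn F (w + (t : ℂ) * Complex.I)).re
        = r := by rw [← hre]; exact Complex.ofReal_re r
    simpa [this] using hr
  refine ⟨D.re, ⟨_, hev, hG'⟩, ?_⟩
  -- compute D.re
  have hDval : D = ((-4 / δ ^ 2 * (α ^ 2 + β ^ 2 - α * α' - β * β') : ℝ) : ℂ) := by
    rw [hD, hw1, hw2, ha, hb, ha', hb']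
    push_cast
    field_simp
    linear_combination (2 * Complex.I * β * (β - β') + 2 * Complex.I * α * (α' - α)
      + 4 * β * (β - β') - 4 * α * (α' - α)) * Complex.I_sq
  have hDre : D.re = -4 / δ ^ 2 * (α ^ 2 + β ^ 2 - α * α' - β * β') := by
    rw [hDval]; exact Complex.ofReal_re _
  -- norms
  have hna : ‖Fup F (w - (δ / 2 : ℝ))‖ ^ 2 = 2 * α ^ 2 := by
    rw [ha, normsq_eq]; simp; ring
  have hna' : ‖Fup F (w + (δ / 2 : ℝ))‖ ^ 2 = 2 * α' ^ 2 := by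
    rw [ha', normsq_eq]; simp; ring
  have hnb : ‖Fdn F (w + (δ / 2 : ℝ))‖ ^ 2 = 2 * β ^ 2 := by
    rw [hb, normsq_eq]; simp; ring
  have hnb' : ‖Fdn F (w - (δ / 2 : ℝ))‖ ^ 2 = 2 * β' ^ 2 := by
    rw [hb', normsq_eq]; simp; ring
  have hsum : H (w + (δ : ℝ)) + H (w - (δ : ℝ)) - 2 * H w
      = 2 * α ^ 2 + 2 * β ^ 2 - 2 * α' ^ 2 - 2 * β' ^ 2 := by
    have := hleft
    have := hright
    rw [hna, hnb'] at hleft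
    rw [hna', hnb] at hright
    linarith
  -- the F-difference
  have hFdiff : F (w + (δ / 2 : ℝ)) - F (w - (δ / 2 : ℝ))
      = ((α' : ℂ) * (1 - Complex.I) + (β : ℂ) * (1 + Complex.I))
        - ((α : ℂ) * (1 - Complex.I) + (β' : ℂ) * (1 + Complex.I)) := by
    have h1 : F (w + (δ / 2 : ℝ)) = Fup F (w + (δ / 2 : ℝ)) + Fdn F (w + (δ / 2 : ℝ)) :=
      (proj_add _).symm
    have h2 : F (w - (δ / 2 : ℝ)) = Fup F (w - (δ / 2 : ℝ)) + Fdn F (w - (δ / 2 : ℝ)) :=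
      (proj_add _).symm
    rw [h1, h2, ha, ha', hb, hb']
  have hnF : ‖F (w + (δ / 2 : ℝ)) - F (w - (δ / 2 : ℝ))‖ ^ 2
      = 2 * (α' - α) ^ 2 + 2 * (β - β') ^ 2 := by
    rw [hFdiff, normsq_eq]; simp; ring
  rw [hDre, hsum, hnF]
  field_simp
  ring
end
end

section
/- S-holomorphicity implies preholomorphicity at a white point: Let δ > 0 and F : ℂ → ℂ be s-holomorphic at the white point w ∈ ℂ. Then the vertical derivative Ḟ(w) of F at w exists and satisfies (1/δ)·(F(w + δ/2) − F(w − δ/2)) + i·Ḟ(w) = 0. -/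
noncomputable section

/-- S-holomorphicity implies preholomorphicity at a white point. -/
theorem shol_white_prehol
    (δ : ℝ) (hδ : 0 < δ) (w : ℂ) (F : ℂ → ℂ) (hsh : SHolWhite δ F w) :
    ∃ dF : ℂ, HasVDerivAt F dF w ∧
      1 / δ * (F (w + (δ / 2 : ℝ)) - F (w - (δ / 2 : ℝ))) + Complex.I * dF = 0 := by
  obtain ⟨h1, h2, h3, h4⟩ := hsh
  refine ⟨Complex.I / δ * (Fdn F (w + (δ / 2 : ℝ)) - Fdn F (w - (δ / 2 : ℝ))) +
    Complex.I / δ * (Fup F (w + (δ / 2 : ℝ)) - Fup F (w - (δ / 2 : ℝ))), ?_, ?_⟩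
  · have := h3.add h4
    have key : ∀ z, Fup F z + Fdn F z = F z := by
      intro z; simp [Fup, Fdn, projUp, projDn]; ring
    unfold HasVDerivAt at this ⊢
    simpa [key, Pi.add_def] using this
  · have key : ∀ z, Fup F z + Fdn F z = F z := by
      intro z; simp [Fup, Fdn, projUp, projDn]; ring
    have hδ' : (δ : ℂ) ≠ 0 := by exact_mod_cast hδ.ne'
    rw [← key, ← key]
    field_simp
    ring_nf
    simp [Complex.I_sq]
end
end

section
/- S-holomorphicity implies preholomorphicity at a black point: Let δ > 0 and F : ℂ → ℂ be s-holomorphic at the black point u ∈ ℂ. Then the vertical derivative Ḟ(u) of F at u exists and satisfies (1/δ)·(F(u + δ/2) − F(u − δ/2)) + i·Ḟ(u) = 0. -/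
noncomputable section

/-- S-holomorphicity implies preholomorphicity at a black point. -/
theorem shol_black_prehol
    (δ : ℝ) (hδ : 0 < δ) (u : ℂ) (F : ℂ → ℂ) (hsh : SHolBlack δ F u) :
    ∃ dF : ℂ, HasVDerivAt F dF u ∧
      1 / δ * (F (u + (δ / 2 : ℝ)) - F (u - (δ / 2 : ℝ))) + Complex.I * dF = 0 := by
  obtain ⟨-, -, hup, hdn⟩ := hsh
  have hF : ∀ z, F z = Fup F z + Fdn F z := by
    intro z
    simp only [Fup, Fdn, projUp, projDn]
    ring
  refine ⟨Complex.I / δ * (F (u + (δ / 2 : ℝ)) - F (u - (δ / 2 : ℝ))), ?_, ?_⟩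
  · have h := hup.add hdn
    unfold HasVDerivAt at h ⊢
    have heq : (fun t : ℝ => F (u + (t : ℂ) * Complex.I)) =
        fun t : ℝ => Fup F (u + (t : ℂ) * Complex.I) + Fdn F (u + (t : ℂ) * Complex.I) := by
      funext t; exact hF _
    rw [heq]
    convert h using 1
    · rfl
    rw [hF (u + (δ / 2 : ℝ)), hF (u - (δ / 2 : ℝ))]
    ring
  · have hδ' : (δ : ℂ) ≠ 0 := by exact_mod_cast hδ.ne'
    field_simp
    ring_nf
    rw [Complex.I_sq]
    ring
end
end
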